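/- If v_1, …, v_n are nonzero vectors in ℝ^d such that the angle between any two distinct vectors v_i and v_j is at least π/2 (equivalently, the inner product ⟨v_i, v_j⟩ is nonpositive for all i ≠ j), then n ≤ 2d. -/

import Mathlib

open scoped InnerProductSpace

open Module Finset in
private lemma rankin_aux : ∀ (D : ℕ) (E : Type) [NormedAddCommGroup E]
    [InnerProductSpace ℝ E] [FiniteDimensional ℝ E],
    Module.finrank ℝ E ≤ D → ∀ {n : ℕ} (v : Fin n → E),
    (∀ i, v i ≠ 0) → (∀ i j, i ≠ j → ⟪v i, v j⟫_ℝ ≤ 0) →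
    n ≤ 2 * Module.finrank ℝ E := by
  intro D
  induction D with
  | zero =>
    intro E _ _ _ hD n v hv _
    have h0 : finrank ℝ E = 0 := Nat.le_zero.mp hD
    have : Subsingleton E := finrank_zero_iff.mp h0
    rcases Nat.eq_zero_or_pos n with h | h
    · omega
    · exact absurd (Subsingleton.elim (v ⟨0, h⟩) 0) (hv ⟨0, h⟩)
  | succ D ih =>
    intro E _ _ _ hD n v hv hangle
    rcases Nat.eq_zero_or_pos n with h | h
    · omega
    have hn : (0 : ℕ) < n := h
    set i0 : Fin n := ⟨0, hn⟩ with hi0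
    have hv0 : v i0 ≠ 0 := hv i0
    have hnorm : ‖v i0‖ ≠ 0 := norm_ne_zero_iff.mpr hv0
    have hnorm2 : ‖v i0‖ ^ 2 ≠ 0 := pow_ne_zero 2 hnorm
    have hnorm2pos : (0:ℝ) < ‖v i0‖ ^ 2 := by positivity
    set c : Fin n → ℝ := fun i => ⟪v i0, v i⟫_ℝ / ‖v i0‖ ^ 2 with hc
    set w : Fin n → E := fun i => v i - c i • v i0 with hw
    have hiv : ∀ i, ⟪v i0, v i⟫_ℝ = c i * ‖v i0‖ ^ 2 := by
      intro i
      rw [hc]; exact (div_mul_cancel₀ _ hnorm2).symm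
    have h_inner : ∀ i j, ⟪w i, w j⟫_ℝ = ⟪v i, v j⟫_ℝ - c i * c j * ‖v i0‖ ^ 2 := by
      intro i j
      have e1 : ⟪v i, v i0⟫_ℝ = c i * ‖v i0‖ ^ 2 := by
        rw [real_inner_comm]; exact hiv i
      have e2 : ⟪v i0, v j⟫_ℝ = c j * ‖v i0‖ ^ 2 := hiv j
      have e3 : ⟪v i0, v i0⟫_ℝ = ‖v i0‖ ^ 2 := real_inner_self_eq_norm_sq _
      simp only [hw, inner_sub_left, inner_sub_right, real_inner_smul_left,
        real_inner_smul_right, e1, e2, e3]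
      ring
    have hcle : ∀ i, i ≠ i0 → c i ≤ 0 := fun i hi =>
      div_nonpos_of_nonpos_of_nonneg (hangle i0 i (Ne.symm hi)) (le_of_lt hnorm2pos)
    have hwle : ∀ i j, i ≠ i0 → j ≠ i0 → i ≠ j → ⟪w i, w j⟫_ℝ ≤ 0 := by
      intro i j hi hj hij
      rw [h_inner]
      have hcc : 0 ≤ c i * c j := by nlinarith [hcle i hi, hcle j hj]
      have hp : 0 ≤ c i * c j * ‖v i0‖ ^ 2 := mul_nonneg hcc hnorm2pos.le
      linarith [hangle i j hij]
    set K : Submodule ℝ E := (ℝ ∙ v i0)ᗮ with hK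
    have hwK : ∀ i, w i ∈ K := by
      intro i
      rw [hK, Submodule.mem_orthogonal_singleton_iff_inner_right]
      have e3 : ⟪v i0, v i0⟫_ℝ = ‖v i0‖ ^ 2 := real_inner_self_eq_norm_sq _
      simp only [hw, inner_sub_right, real_inner_smul_right, e3, hiv i]
      ring
    have hrank : finrank ℝ K + 1 = finrank ℝ E := by
      have h1 : finrank ℝ (ℝ ∙ v i0) = 1 := finrank_span_singleton hv0
      have h2 := Submodule.finrank_add_finrank_orthogonal (K := (ℝ ∙ v i0))
      rw [hK]; omega
    have hEpos : 1 ≤ finrank ℝ E := by omega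
    classical
    set S : Finset (Fin n) := Finset.filter (fun i => w i = 0) Finset.univ with hS
    set T : Finset (Fin n) := Finset.filter (fun i => w i ≠ 0) Finset.univ with hT
    have hST : S.card + T.card = n := by
      rw [hS, hT, Finset.card_filter_add_card_filter_not]
      simp
    have hcne : ∀ i ∈ S, c i ≠ 0 := by
      intro i hi
      rw [hS, Finset.mem_filter] at hi
      intro hc0
      apply hv i
      have : v i - c i • v i0 = 0 := hi.2
      rw [hc0, zero_smul, sub_zero] at this
      exact this
    have hSopp : ∀ i ∈ S, ∀ j ∈ S, i ≠ j → c i * c j < 0 := by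
      intro i hi j hj hij
      have hi' := hi; have hj' := hj
      rw [hS, Finset.mem_filter] at hi' hj'
      have h1 : ⟪w i, w j⟫_ℝ = 0 := by rw [hi'.2, inner_zero_left]
      have h2 := h_inner i j
      rw [h1] at h2
      have h4 : ⟪v i, v j⟫_ℝ ≤ 0 := hangle i j hij
      have h5 : c i * c j ≤ 0 := by nlinarith
      rcases lt_or_eq_of_le h5 with h | h
      · exact h
      · exfalso
        rcases mul_eq_zero.mp h with h | h
        · exact hcne i hi h
        · exact hcne j hj h
    have hScard : S.card ≤ 2 := by
      have hinj : Set.InjOn (fun i => decide (0 < c i)) ↑S := by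
        intro i hi j hj hij
        by_contra hne
        have hopp := hSopp i hi j hj hne
        simp only [decide_eq_decide] at hij
        rcases lt_or_ge 0 (c i) with h | h
        · have h' := hij.mp h
          nlinarith
        · have h' : c j ≤ 0 := by
            by_contra hc'
            push_neg at hc'
            exact absurd (hij.mpr hc') (not_lt.mpr h)
          nlinarith
      calc S.card ≤ (Finset.univ : Finset Bool).card :=
            Finset.card_le_card_of_injOn _ (fun a _ => Finset.mem_univ _) hinj
        _ = 2 := by simp
    have hw0 : w i0 = 0 := by
      have hc1 : c i0 = 1 := by
        rw [hc]
        simp only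
        rw [real_inner_self_eq_norm_sq]
        field_simp
      simp [hw, hc1]
    have hTne : ∀ i ∈ T, i ≠ i0 := by
      intro i hi
      rw [hT, Finset.mem_filter] at hi
      intro hcon
      exact hi.2 (hcon ▸ hw0)
    have hTcard : T.card ≤ 2 * finrank ℝ K := by
      let e := T.equivFin
      let u : Fin T.card → K := fun k => ⟨w (e.symm k : Fin n), hwK _⟩
      have hu0 : ∀ k, u k ≠ 0 := by
        intro k hk
        have hz : w (e.symm k : Fin n) = 0 := by
          exact congrArg Subtype.val hk
        exact (Finset.mem_filter.mp (e.symm k).2).2 hz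
      have huangle : ∀ k l, k ≠ l → ⟪u k, u l⟫_ℝ ≤ 0 := by
        intro k l hkl
        have hne : (e.symm k : Fin n) ≠ (e.symm l : Fin n) := by
          intro hcon
          exact hkl (by simpa using e.symm.injective (Subtype.ext hcon))
        have h1 := hwle (e.symm k) (e.symm l) (hTne _ (e.symm k).2) (hTne _ (e.symm l).2) hne
        rw [Submodule.coe_inner]
        exact h1
      exact ih K (by omega) u hu0 huangle
    omega

/-- Rankin: if nonzero vectors in ℝ^d pairwise have nonpositive inner
products (i.e. pairwise angles at least π/2), then there are at most `2 * d`
of them. -/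
theorem rankin_nonacute {n d : ℕ} (v : Fin n → EuclideanSpace ℝ (Fin d))
    (hv : ∀ i, v i ≠ 0)
    (hangle : ∀ i j, i ≠ j → ⟪v i, v j⟫_ℝ ≤ 0) :
    n ≤ 2 * d := by
  have := rankin_aux d (EuclideanSpace ℝ (Fin d)) (by simp) v hv hangle
  simpa using this
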